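/- arXiv:2003.13116 — 2 statements merged into one kernel-verified Lean document; each statement's English description precedes it below -/
import Mathlib

section
/- If x ∈ ℝ³ satisfies √2 − 1 ≤ ‖x‖ ≤ √2 + 1 and z ∈ ℂ satisfies |z| < √2 − 1, then 1 + 2x₁ z + ‖x‖² z² ≠ 0. -/
set_option maxHeartbeats 1000000 in
theorem Q_nonzero_on_disk (x₁ x₂ x₃ : ℝ)
    (h₁ : Real.sqrt 2 - 1 ≤ Real.sqrt (x₁^2 + x₂^2 + x₃^2))
    (h₂ : Real.sqrt (x₁^2 + x₂^2 + x₃^2) ≤ Real.sqrt 2 + 1)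
    (z : ℂ) (hz : ‖z‖ < Real.sqrt 2 - 1) :
    1 + 2 * (x₁ : ℂ) * z + ((x₁^2 + x₂^2 + x₃^2 : ℝ) : ℂ) * z^2 ≠ 0 := by
  intro h
  have hs2 : Real.sqrt 2 ^ 2 = 2 := Real.sq_sqrt (by norm_num)
  have hs2pos : (1:ℝ) < Real.sqrt 2 := by
    nlinarith [Real.sqrt_nonneg 2]
  have hr2nn : (0:ℝ) ≤ x₁^2 + x₂^2 + x₃^2 := by positivity
  have hz0 : z ≠ 0 := by
    rintro rfl
    simp at h
  have hzi : z * z⁻¹ = 1 := mul_inv_cancel₀ hz0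
  have hw : (z⁻¹)^2 + 2*(x₁:ℂ)*z⁻¹ + ((x₁^2 + x₂^2 + x₃^2 : ℝ) : ℂ) = 0 := by
    linear_combination (z⁻¹)^2 * h -
      (2*(x₁:ℂ)*z⁻¹ + ((x₁^2 + x₂^2 + x₃^2 : ℝ) : ℂ)*(z*z⁻¹+1)) * hzi
  set a := (z⁻¹).re with ha
  set b := (z⁻¹).im with hb
  rw [Complex.ext_iff] at hw
  simp [pow_two, Complex.mul_re, Complex.mul_im, ← ha, ← hb] at hw
  obtain ⟨hre, him⟩ := hw
  have key : a^2 + b^2 = x₁^2 + x₂^2 + x₃^2 := by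
    have him' : b * (a + x₁) = 0 := by linarith [him]; 
    rcases mul_eq_zero.mp him' with hb0 | ha0
    · have hbb : b * b = 0 := by rw [hb0]; ring
      have h5 : (a + x₁)^2 + (x₂^2 + x₃^2) = 0 := by linear_combination hre + hbb
      have h6 : (a + x₁)^2 = 0 := by nlinarith [sq_nonneg x₂, sq_nonneg x₃, sq_nonneg (a + x₁)]
      have ha1 : a + x₁ = 0 := by
        have := pow_eq_zero_iff (n := 2) (by norm_num) |>.mp h6
        exact this
      have hx23 : x₂^2 + x₃^2 = 0 := by linarith
      linear_combination (a - x₁) * ha1 + b * hb0 - hx23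
    · linear_combination (-1 : ℝ) * hre + 2 * a * ha0
  have hns : Complex.normSq z⁻¹ = x₁^2 + x₂^2 + x₃^2 := by
    rw [Complex.normSq_apply, ← ha, ← hb]; nlinarith [key]
  have hnz : Complex.normSq z * (x₁^2 + x₂^2 + x₃^2) = 1 := by
    rw [← hns, Complex.normSq_inv]
    field_simp [Complex.normSq_eq_zero.not.mpr hz0]
  have habs : Complex.normSq z = ‖z‖ ^ 2 := (Complex.sq_norm z).symm
  have hr2le : x₁^2 + x₂^2 + x₃^2 ≤ (Real.sqrt 2 + 1)^2 := by
    have hq := Real.sq_sqrt hr2nn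
    nlinarith [Real.sqrt_nonneg (x₁^2 + x₂^2 + x₃^2)]
  have hza : (0:ℝ) ≤ ‖z‖ := norm_nonneg z
  have ht2 : ‖z‖ ^ 2 < (Real.sqrt 2 - 1)^2 := by nlinarith
  have hApos : (0:ℝ) < (Real.sqrt 2 + 1)^2 := by positivity
  have hprod : (Real.sqrt 2 - 1)^2 * (Real.sqrt 2 + 1)^2 = 1 := by
    linear_combination (Real.sqrt 2 ^ 2) * hs2
  have h1' : (1:ℝ) ≤ ‖z‖ ^ 2 * (Real.sqrt 2 + 1)^2 := by
    calc (1:ℝ) = ‖z‖ ^ 2 * (x₁^2 + x₂^2 + x₃^2) := by rw [← habs]; linarith [hnz]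
      _ ≤ ‖z‖ ^ 2 * (Real.sqrt 2 + 1)^2 :=
          mul_le_mul_of_nonneg_left hr2le (sq_nonneg _)
  have h2' : ‖z‖ ^ 2 * (Real.sqrt 2 + 1)^2 < 1 := by
    have := mul_lt_mul_of_pos_right ht2 hApos
    linarith [hprod, this]
  linarith
end

section
/- The inversion i(x) = x/‖x‖² on ℝ³ \ {0} maps the torus T_{√2} (major radius √2, minor radius 1) onto itself as a point set. -/
private lemma sqrt2_sq : (Real.sqrt 2)^2 = 2 := Real.sq_sqrt (by norm_num)

private lemma Npos (v : ℝ) : 0 < 3 + 2 * Real.sqrt 2 * Real.cos v := by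
  have h1 := Real.neg_one_le_cos v
  have h2 := Real.cos_le_one v
  have h3 : Real.sqrt 2 < 1.5 := by nlinarith [sqrt2_sq, Real.sqrt_nonneg 2]
  nlinarith [Real.sqrt_nonneg 2]

private lemma exists_angle (c s : ℝ) (h : c^2 + s^2 = 1) :
    ∃ v : ℝ, Real.cos v = c ∧ Real.sin v = s := by
  have habs : ‖(⟨c, s⟩ : ℂ)‖ = 1 := by
    rw [Complex.norm_def, Complex.normSq_mk]
    rw [show c * c + s * s = 1 by nlinarith]
    exact Real.sqrt_one
  have hz : (⟨c, s⟩ : ℂ) ≠ 0 := by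
    intro h0; rw [h0] at habs; simp at habs
  exact ⟨Complex.arg ⟨c, s⟩, by rw [Complex.cos_arg hz, habs]; simp,
    by rw [Complex.sin_arg, habs]; simp⟩

private lemma normsq (u v : ℝ) :
    ((Real.sqrt 2 + Real.cos v) * Real.cos u)^2 +
    ((Real.sqrt 2 + Real.cos v) * Real.sin u)^2 + (Real.sin v)^2
    = 3 + 2 * Real.sqrt 2 * Real.cos v := by
  have pu := Real.sin_sq_add_cos_sq u
  have pv := Real.sin_sq_add_cos_sq v
  nlinarith [sqrt2_sq]

private lemma fwd (u v : ℝ) :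
    ∃ v' : ℝ,
      (((Real.sqrt 2 + Real.cos v) * Real.cos u) /
          (((Real.sqrt 2 + Real.cos v) * Real.cos u)^2 +
           ((Real.sqrt 2 + Real.cos v) * Real.sin u)^2 + (Real.sin v)^2),
       ((Real.sqrt 2 + Real.cos v) * Real.sin u) /
          (((Real.sqrt 2 + Real.cos v) * Real.cos u)^2 +
           ((Real.sqrt 2 + Real.cos v) * Real.sin u)^2 + (Real.sin v)^2),
       Real.sin v /
          (((Real.sqrt 2 + Real.cos v) * Real.cos u)^2 +
           ((Real.sqrt 2 + Real.cos v) * Real.sin u)^2 + (Real.sin v)^2))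
      = ((Real.sqrt 2 + Real.cos v') * Real.cos u,
         (Real.sqrt 2 + Real.cos v') * Real.sin u,
         Real.sin v')
    ∧
      (((Real.sqrt 2 + Real.cos v') * Real.cos u) /
          (((Real.sqrt 2 + Real.cos v') * Real.cos u)^2 +
           ((Real.sqrt 2 + Real.cos v') * Real.sin u)^2 + (Real.sin v')^2),
       ((Real.sqrt 2 + Real.cos v') * Real.sin u) /
          (((Real.sqrt 2 + Real.cos v') * Real.cos u)^2 +
           ((Real.sqrt 2 + Real.cos v') * Real.sin u)^2 + (Real.sin v')^2),
       Real.sin v' /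
          (((Real.sqrt 2 + Real.cos v') * Real.cos u)^2 +
           ((Real.sqrt 2 + Real.cos v') * Real.sin u)^2 + (Real.sin v')^2))
      = ((Real.sqrt 2 + Real.cos v) * Real.cos u,
         (Real.sqrt 2 + Real.cos v) * Real.sin u,
         Real.sin v) := by
  have hN : (3 + 2 * Real.sqrt 2 * Real.cos v) ≠ 0 := ne_of_gt (Npos v)
  have pv := Real.sin_sq_add_cos_sq v
  have hc : ((Real.sqrt 2 + Real.cos v) / (3 + 2 * Real.sqrt 2 * Real.cos v) - Real.sqrt 2)^2
      + (Real.sin v / (3 + 2 * Real.sqrt 2 * Real.cos v))^2 = 1 := by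
    rw [div_sub' hN, div_pow, div_pow, ← add_div, div_eq_one_iff_eq (pow_ne_zero 2 hN)]
    linear_combination pv + (4 * (Real.sqrt 2)^2 * (Real.cos v)^2
      + 8 * Real.sqrt 2 * Real.cos v + 4) * sqrt2_sq
  obtain ⟨v', hcv, hsv⟩ := exists_angle _ _ hc
  have h1 : Real.sqrt 2 + Real.cos v' =
      (Real.sqrt 2 + Real.cos v) / (3 + 2 * Real.sqrt 2 * Real.cos v) := by
    rw [hcv]; ring
  have hN' : (3 + 2 * Real.sqrt 2 * Real.cos v') ≠ 0 := ne_of_gt (Npos v')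
  have hNN' : (3 + 2 * Real.sqrt 2 * Real.cos v) * (3 + 2 * Real.sqrt 2 * Real.cos v') = 1 := by
    have hcv' : (3 + 2 * Real.sqrt 2 * Real.cos v) * Real.cos v' =
        (Real.sqrt 2 + Real.cos v) - Real.sqrt 2 * (3 + 2 * Real.sqrt 2 * Real.cos v) := by
      rw [hcv]; field_simp
    linear_combination 2 * Real.sqrt 2 * hcv' +
      (2 - 2 * (3 + 2 * Real.sqrt 2 * Real.cos v)) * sqrt2_sq
  refine ⟨v', ?_, ?_⟩
  · rw [normsq u v]
    refine Prod.ext ?_ (Prod.ext ?_ ?_) <;> simp only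
    · rw [h1]; ring
    · rw [h1]; ring
    · rw [hsv]
  · rw [normsq u v']
    have hNinv : (3 + 2 * Real.sqrt 2 * Real.cos v') = (3 + 2 * Real.sqrt 2 * Real.cos v)⁻¹ :=
      eq_inv_of_mul_eq_one_left (by linear_combination hNN')
    refine Prod.ext ?_ (Prod.ext ?_ ?_) <;> simp only
    · rw [h1, hNinv]; field_simp
      rw [mul_right_comm, mul_div_cancel_right₀ _ (by convert hN using 1; ring)]
    · rw [h1, hNinv]; field_simp
      rw [mul_right_comm, mul_div_cancel_right₀ _ (by convert hN using 1; ring)]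
    · rw [hsv, hNinv]; field_simp

theorem inversion_maps_clifford_torus_to_itself :
    (fun p : ℝ × ℝ × ℝ =>
        (p.1 / (p.1^2 + p.2.1^2 + p.2.2^2),
         p.2.1 / (p.1^2 + p.2.1^2 + p.2.2^2),
         p.2.2 / (p.1^2 + p.2.1^2 + p.2.2^2))) ''
      {p : ℝ × ℝ × ℝ | ∃ u v : ℝ,
        p = ((Real.sqrt 2 + Real.cos v) * Real.cos u,
             (Real.sqrt 2 + Real.cos v) * Real.sin u,
             Real.sin v)} =
    {p : ℝ × ℝ × ℝ | ∃ u v : ℝ,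
        p = ((Real.sqrt 2 + Real.cos v) * Real.cos u,
             (Real.sqrt 2 + Real.cos v) * Real.sin u,
             Real.sin v)} := by
  ext q
  constructor
  · rintro ⟨p, ⟨u, v, rfl⟩, rfl⟩
    obtain ⟨v', h1, _⟩ := fwd u v
    exact ⟨u, v', h1⟩
  · rintro ⟨u, v, rfl⟩
    obtain ⟨v', _, h2⟩ := fwd u v
    exact ⟨((Real.sqrt 2 + Real.cos v') * Real.cos u,
            (Real.sqrt 2 + Real.cos v') * Real.sin u,
            Real.sin v'), ⟨u, v', rfl⟩, h2⟩
end
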